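/- Let G be a finite, 2-connected, claw-free graph in which every induced paw (with pendant vertex a₁ and the two triangle vertices b₁, b₂ non-adjacent to a₁) satisfies that a₁ has a common neighbour outside the paw with b₁ or with b₂. Then either G is pancyclic or G is a cycle. -/

import Mathlib

open SimpleGraph

/-- The claw `K_{1,3}`: vertex `0` is the centre, adjacent to `1`, `2`, `3`. -/
def claw : SimpleGraph (Fin 4) := SimpleGraph.fromRel (fun a _ => a = 0)

/-- The paw: a triangle on `1, 2, 3` with pendant vertex `0` attached to `1`. -/
def paw : SimpleGraph (Fin 4) :=
  SimpleGraph.fromRel (fun a b => (a = 0 ∧ b = 1) ∨ (a ≠ 0 ∧ b ≠ 0))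

/-- `G` is `H`-free: no induced subgraph of `G` is isomorphic to `H`.
(`H ↪g G` is a graph embedding, i.e. an isomorphism onto an induced subgraph.) -/
def HFree {W V : Type*} (H : SimpleGraph W) (G : SimpleGraph V) : Prop :=
  ¬ Nonempty (H ↪g G)

/-- `G` is 2-connected: at least 3 vertices, connected, and deleting any vertex
leaves it connected. -/
def TwoConnected {V : Type*} (G : SimpleGraph V) : Prop :=
  (∃ a b c : V, a ≠ b ∧ a ≠ c ∧ b ≠ c) ∧ G.Connected ∧
    ∀ v : V, (G.induce {u | u ≠ v}).Connected

/-- The hypothesis that every induced paw of `G`, with pendant vertex `a₁` adjacent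
precisely to the triangle vertex `a₀`, satisfies `φ(a₁,b₁)` or `φ(a₁,b₂)`:
`a₁` has a common neighbour outside the paw with `b₁` or with `b₂`. -/
def PawCondition {V : Type*} (G : SimpleGraph V) : Prop :=
  ∀ a₁ a₀ b₁ b₂ : V,
    G.Adj a₁ a₀ → G.Adj a₀ b₁ → G.Adj a₀ b₂ → G.Adj b₁ b₂ →
    ¬ G.Adj a₁ b₁ → ¬ G.Adj a₁ b₂ → a₁ ≠ b₁ → a₁ ≠ b₂ →
    ∃ x, x ∉ ({a₁, a₀, b₁, b₂} : Set V) ∧ G.Adj x a₁ ∧ (G.Adj x b₁ ∨ G.Adj x b₂)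

/-- A ray (one-way infinite path) in `G`, given by its sequence of vertices. -/
def IsRay {V : Type*} (G : SimpleGraph V) (f : ℕ → V) : Prop :=
  Function.Injective f ∧ ∀ n, G.Adj (f n) (f (n + 1))

/-- Two rays are equivalent (belong to the same end) if no finite vertex set
separates them. -/
def EndEquiv {V : Type*} (G : SimpleGraph V) (f g : ℕ → V) : Prop :=
  ∀ S : Set V, S.Finite →
    ∃ (m n : ℕ) (p : G.Walk (f m) (g n)), ∀ x ∈ p.support, x ∉ S

/-- The ends of `G`, as equivalence classes of rays. -/
def Ends {V : Type*} (G : SimpleGraph V) : Type _ :=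
  Quot (fun f g : {f : ℕ → V // IsRay G f} => EndEquiv G f.1 g.1)

/-- The edge cut `δ(X)`. -/
def edgeCut {V : Type*} (G : SimpleGraph V) (X : Set V) : Set (Sym2 V) :=
  {e | e ∈ G.edgeSet ∧ ∃ a b, e = s(a, b) ∧ a ∈ X ∧ b ∉ X}

/-- `G` has a Hamilton circle in its Freudenthal compactification `|G|`,
expressed combinatorially: there is a spanning edge set `C` in which every
vertex has degree exactly `2` and which meets every finite cut of `G` in a
positive even number of edges (for locally finite connected `G` this
characterises edge sets whose closure in `|G|` is a circle through all
vertices). -/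
def HasHamiltonCircle {V : Type*} (G : SimpleGraph V) : Prop :=
  ∃ C ⊆ G.edgeSet, (∀ v : V, {e ∈ C | v ∈ e}.ncard = 2) ∧
    ∀ X : Set V, X.Nonempty → Xᶜ.Nonempty → (edgeCut G X).Finite →
      (C ∩ edgeCut G X).Nonempty ∧ Even ((C ∩ edgeCut G X).ncard)

/-- The end represented by the ray `g` lies in the closure (in `|G|`) of the
vertex set `M`: for every finite `S`, the component of `G - S` containing a
tail of `g` meets `M`. -/
def EndInClosure {V : Type*} (G : SimpleGraph V) (g : ℕ → V) (M : Set V) : Prop :=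
  ∀ S : Set V, S.Finite → ∃ u ∈ M, ∃ N : ℕ, ∀ n ≥ N,
    ∃ p : G.Walk u (g n), ∀ x ∈ p.support, x ∉ S

/-- `S` is a vertex separator of `G`: `G - S` is disconnected. -/
def IsSeparator {V : Type*} (G : SimpleGraph V) (S : Set V) : Prop :=
  ∃ (u : V) (hu : u ∉ S) (v : V) (hv : v ∉ S),
    ¬ (G.induce {x | x ∉ S}).Reachable ⟨u, hu⟩ ⟨v, hv⟩

/-- `S` is a minimal vertex separator of `G`. -/
def IsMinSeparator {V : Type*} (G : SimpleGraph V) (S : Set V) : Prop :=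
  IsSeparator G S ∧ ∀ T ⊂ S, ¬ IsSeparator G T

/-- The `k`-blow-up of `G`: each vertex is replaced by a `k`-clique. -/
def blowup {V : Type*} (G : SimpleGraph V) (k : ℕ) : SimpleGraph (V × Fin k) where
  Adj x y := (x.1 = y.1 ∧ x.2 ≠ y.2) ∨ G.Adj x.1 y.1
  symm := ⟨by
    rintro x y (⟨h1, h2⟩ | h)
    · exact Or.inl ⟨h1.symm, h2.symm⟩
    · exact Or.inr h.symm⟩
  loopless := ⟨by
    rintro x (⟨_, h⟩ | h)
    · exact h rfl
    · exact G.irrefl h⟩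




namespace Stmt15

variable {V : Type} {G : SimpleGraph V}

def IsCyc (G : SimpleGraph V) (c : ℕ → V) (k : ℕ) : Prop :=
  3 ≤ k ∧ (∀ t, c (t + k) = c t) ∧
    (∀ s t, s < k → t < k → c s = c t → s = t) ∧
    (∀ t, G.Adj (c t) (c (t + 1)))

namespace IsCyc

variable {c : ℕ → V} {k : ℕ}

lemma k3 (h : IsCyc G c k) : 3 ≤ k := h.1
lemma kpos (h : IsCyc G c k) : 0 < k := by have := h.1; omega
lemma adj (h : IsCyc G c k) (t : ℕ) : G.Adj (c t) (c (t + 1)) := h.2.2.2 t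

lemma mod (h : IsCyc G c k) (t : ℕ) : c t = c (t % k) := by
  induction t using Nat.strong_induction_on with
  | _ t ih =>
    rcases lt_or_ge t k with ht | ht
    · rw [Nat.mod_eq_of_lt ht]
    · have h1 : t = (t - k) + k := by omega
      conv_lhs => rw [h1]
      rw [h.2.1, ih (t - k) (by have := h.kpos; omega)]
      congr 1
      conv_rhs => rw [h1]
      rw [Nat.add_mod_right]

lemma eq_iff (h : IsCyc G c k) {a b : ℕ} : c a = c b ↔ a % k = b % k := by
  constructor
  · intro hab
    rw [h.mod a, h.mod b] at hab
    exact h.2.2.1 _ _ (Nat.mod_lt _ h.kpos) (Nat.mod_lt _ h.kpos) hab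
  · intro hab
    rw [h.mod a, h.mod b, hab]

end IsCyc

def OnC (c : ℕ → V) (k : ℕ) (u : V) : Prop := ∃ t, t < k ∧ u = c t

lemma onC_c (h : IsCyc G c k) (t : ℕ) : OnC c k (c t) :=
  ⟨t % k, Nat.mod_lt _ h.kpos, h.mod t⟩

lemma notOnC_ne {c : ℕ → V} {k : ℕ} {v : V} (hv : ¬ OnC c k v)
    (h : IsCyc G c k) (t : ℕ) : v ≠ c t := by
  intro he; exact hv (he ▸ onC_c h t)

lemma rot (h : IsCyc G c k) (i : ℕ) : IsCyc G (fun t => c (t + i)) k := by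
  refine ⟨h.k3, fun t => ?_, fun s t hs ht hst => ?_, fun t => ?_⟩
  · show c (t + k + i) = c (t + i)
    rw [h.eq_iff, show t + k + i = t + i + k by omega, Nat.add_mod_right]
  · have hs' : (s + i) % k = (t + i) % k := h.eq_iff.mp hst
    have h1 := Nat.add_mod s i k
    have h2 := Nat.add_mod t i k
    have hk := h.kpos
    have h3 : (s % k + i % k) % k = (t % k + i % k) % k := by rw [← h1, ← h2, hs']
    rw [Nat.mod_eq_of_lt hs, Nat.mod_eq_of_lt ht] at h3
    have h4 : i % k < k := Nat.mod_lt _ hk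
    -- s + i%k and t + i%k congruent mod k, both < 2k
    have h5 : (s + i % k) % k = (t + i % k) % k := h3
    have h6 : s + i % k < 2 * k := by omega
    have h7 : t + i % k < 2 * k := by omega
    have e1 : (s + i % k) % k = if s + i % k < k then s + i % k else s + i % k - k := by
      split
      · exact Nat.mod_eq_of_lt (by omega)
      · rw [Nat.mod_eq_sub_mod (by omega), Nat.mod_eq_of_lt (by omega)]
    have e2 : (t + i % k) % k = if t + i % k < k then t + i % k else t + i % k - k := by
      split
      · exact Nat.mod_eq_of_lt (by omega)
      · rw [Nat.mod_eq_sub_mod (by omega), Nat.mod_eq_of_lt (by omega)]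
    rw [e1, e2] at h5
    split at h5 <;> split at h5 <;> omega
  · show G.Adj (c (t + i)) (c (t + 1 + i))
    rw [show t + 1 + i = (t + i) + 1 by omega]
    exact h.adj _

lemma onC_rot (h : IsCyc G c k) (i : ℕ) (u : V) :
    OnC (fun t => c (t + i)) k u ↔ OnC c k u := by
  constructor
  · rintro ⟨t, ht, rfl⟩; exact onC_c h (t + i)
  · rintro ⟨t, ht, rfl⟩
    have hk := h.kpos
    refine ⟨(t + (k - i % k)) % k, Nat.mod_lt _ hk, ?_⟩
    show c t = c ((t + (k - i % k)) % k + i)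
    rw [h.eq_iff]
    have h4 : i % k < k := Nat.mod_lt _ hk
    calc t % k = (t + k) % k := by rw [Nat.add_mod_right]
    _ = (t + (k - i % k) + i % k) % k := by congr 1; omega
    _ = (t + (k - i % k) + i) % k := by rw [Nat.add_mod_mod]
    _ = ((t + (k - i % k)) % k + i) % k := by rw [Nat.mod_add_mod]

lemma rev (h : IsCyc G c k) : IsCyc G (fun t => c (k - t % k)) k := by
  have hk := h.kpos
  have hk3 := h.k3
  refine ⟨h.k3, fun t => ?_, fun s t hs ht hst => ?_, fun t => ?_⟩
  · show c (k - (t + k) % k) = c (k - t % k)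
    rw [Nat.add_mod_right]
  · have h1 : (k - s % k) % k = (k - t % k) % k := h.eq_iff.mp hst
    rw [Nat.mod_eq_of_lt hs, Nat.mod_eq_of_lt ht] at h1
    rcases Nat.eq_zero_or_pos s with rfl | hs0 <;> rcases Nat.eq_zero_or_pos t with rfl | ht0
    · rfl
    · rw [Nat.sub_zero, Nat.mod_self, Nat.mod_eq_of_lt (by omega)] at h1; omega
    · rw [Nat.sub_zero, Nat.mod_self, Nat.mod_eq_of_lt (by omega)] at h1; omega
    · rw [Nat.mod_eq_of_lt (by omega), Nat.mod_eq_of_lt (by omega)] at h1; omega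
  · have hu : t % k < k := Nat.mod_lt _ hk
    have h2 : (t + 1) % k = (t % k + 1) % k := by
      rw [Nat.add_mod t 1 k, Nat.mod_eq_of_lt (show 1 < k by omega)]
    show G.Adj (c (k - t % k)) (c (k - (t + 1) % k))
    rcases Nat.lt_or_ge (t % k) (k - 1) with hlt | hge
    · have h3 : (t + 1) % k = t % k + 1 := by
        rw [h2, Nat.mod_eq_of_lt (by omega)]
      rw [h3]
      have := h.adj (k - (t % k + 1))
      rw [show k - (t % k + 1) + 1 = k - t % k by omega] at this
      exact this.symm
    · have h3 : t % k = k - 1 := by omega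
      have h4 : (t + 1) % k = 0 := by rw [h2, h3, show k - 1 + 1 = k by omega, Nat.mod_self]
      rw [h3, h4, show k - (k-1) = 1 by omega, Nat.sub_zero]
      have e : c k = c 0 := by rw [h.eq_iff, Nat.mod_self, Nat.zero_mod]
      rw [e]
      exact (h.adj 0).symm

lemma onC_rev (h : IsCyc G c k) (u : V) :
    OnC (fun t => c (k - t % k)) k u ↔ OnC c k u := by
  have hk := h.kpos
  constructor
  · rintro ⟨t, ht, rfl⟩; exact onC_c h _
  · rintro ⟨t, ht, rfl⟩
    refine ⟨(k - t) % k, Nat.mod_lt _ hk, ?_⟩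
    show c t = c (k - (k - t) % k % k)
    rw [Nat.mod_mod_of_dvd _ (dvd_refl k)]
    rcases Nat.eq_zero_or_pos t with rfl | ht0
    · rw [Nat.sub_zero, Nat.mod_self, Nat.sub_zero, h.eq_iff, Nat.mod_self, Nat.zero_mod]
    · rw [Nat.mod_eq_of_lt (by omega), show k - (k - t) = t by omega]

lemma succMod (n t : ℕ) (hn : 0 < n) :
    (t + 1) % n = if t % n = n - 1 then 0 else t % n + 1 := by
  have h2 : (t + 1) % n = (t % n + 1) % n := by
    rw [Nat.add_mod t 1 n, Nat.add_mod_mod]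
  have hu : t % n < n := Nat.mod_lt _ hn
  rw [h2]
  split
  · next hh => rw [hh, show n - 1 + 1 = n by omega, Nat.mod_self]
  · next hh => exact Nat.mod_eq_of_lt (by omega)

/-- Build an `IsCyc` from data on `[0, K)`. -/
lemma mkCyc (F : ℕ → V) (K : ℕ) (hK : 3 ≤ K)
    (hadj : ∀ u, u + 1 < K → G.Adj (F u) (F (u + 1)))
    (hlast : G.Adj (F (K - 1)) (F 0))
    (hinj : ∀ s t, s < K → t < K → F s = F t → s = t) :
    IsCyc G (fun t => F (t % K)) K := by
  have hKpos : 0 < K := by omega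
  refine ⟨hK, fun t => ?_, fun s t hs ht hst => ?_, fun t => ?_⟩
  · show F ((t + K) % K) = F (t % K)
    rw [Nat.add_mod_right]
  · have hst' : F (s % K) = F (t % K) := hst
    rw [Nat.mod_eq_of_lt hs, Nat.mod_eq_of_lt ht] at hst'
    exact hinj _ _ hs ht hst' 
  · show G.Adj (F (t % K)) (F ((t + 1) % K))
    rw [succMod K t hKpos]
    split
    · next hh => rw [hh]; exact hlast
    · next hh =>
        exact hadj _ (by have := Nat.mod_lt t hKpos; omega)

section Constructions

variable {c : ℕ → V} {k : ℕ} {v x : V}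

/-- Insertion: `v` adjacent to two consecutive cycle vertices gives a `(k+1)`-cycle. -/
lemma cycE0 (h : IsCyc G c k) (hv : ¬ OnC c k v)
    (h0 : G.Adj v (c 0)) (h1 : G.Adj v (c 1)) : ∃ c', IsCyc G c' (k + 1) := by
  have hk := h.k3
  have hvne : ∀ t, v ≠ c t := notOnC_ne hv h
  set F : ℕ → V := fun u => if u = 0 then v else c u with hF
  have hF0 : F 0 = v := by simp [hF]
  have hFc : ∀ u, u ≠ 0 → F u = c u := by intro u hu; simp [hF, hu]
  refine ⟨_, mkCyc F (k+1) (by omega) ?_ ?_ ?_⟩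
  · intro u hu
    rcases Nat.eq_zero_or_pos u with rfl | hu0
    · rw [hF0, hFc 1 (by omega)]; exact h1
    · rw [hFc u (by omega), hFc (u+1) (by omega)]; exact h.adj u
  · rw [show k + 1 - 1 = k by omega, hFc k (by omega), hF0]
    have : c k = c 0 := by rw [h.eq_iff, Nat.mod_self, Nat.zero_mod]
    rw [this]; exact h0.symm
  · intro s t hs ht hst
    have hck : c k = c 0 := by rw [h.eq_iff, Nat.mod_self, Nat.zero_mod]
    rcases Nat.eq_zero_or_pos s with rfl | hs0 <;> rcases Nat.eq_zero_or_pos t with rfl | ht0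
    · rfl
    · rw [hF0, hFc t (by omega)] at hst
      rcases Nat.lt_or_ge t k with h' | h'
      · exact absurd hst (hvne t)
      · have : t = k := by omega
        subst this; rw [hck] at hst; exact absurd hst (hvne 0)
    · rw [hF0, hFc s (by omega)] at hst
      rcases Nat.lt_or_ge s k with h' | h'
      · exact absurd hst.symm (hvne s)
      · have : s = k := by omega
        subst this; rw [hck] at hst; exact absurd hst.symm (hvne 0)
    · rw [hFc s (by omega), hFc t (by omega)] at hst
      have := h.eq_iff.mp hst
      have hsk : s ≤ k := by omega
      have htk : t ≤ k := by omega
      have e1 : s % k = if s = k then 0 else s := by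
        split
        · next hh => rw [hh, Nat.mod_self]
        · next hh => exact Nat.mod_eq_of_lt (by omega)
      have e2 : t % k = if t = k then 0 else t := by
        split
        · next hh => rw [hh, Nat.mod_self]
        · next hh => exact Nat.mod_eq_of_lt (by omega)
      rw [e1, e2] at this
      split at this <;> split at this <;> omega

/-- General-position insertion. -/
lemma cycE (h : IsCyc G c k) (hv : ¬ OnC c k v) {i : ℕ}
    (h0 : G.Adj v (c i)) (h1 : G.Adj v (c (i + 1))) : ∃ c', IsCyc G c' (k + 1) := by
  apply cycE0 (rot h i) (v := v)
  · rw [onC_rot h i]; exact hv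
  · show G.Adj v (c (0 + i)); rwa [Nat.zero_add]
  · show G.Adj v (c (1 + i)); rwa [Nat.add_comm 1 i]

/-- Skip-insertion: insert the path `v x` across the edge `c 0, c 1` and skip `c m`
using the chord `c (m-1) – c (m+1)`. -/
lemma cycS0 (h : IsCyc G c k) (hv : ¬ OnC c k v) (hx : ¬ OnC c k x) (hvx : v ≠ x)
    (hadjvx : G.Adj v x) (h0 : G.Adj v (c 0)) (h1 : G.Adj x (c 1))
    {m : ℕ} (hm2 : 2 ≤ m) (hmk : m ≤ k - 1)
    (hchord : G.Adj (c (m - 1)) (c (m + 1))) : ∃ c', IsCyc G c' (k + 1) := by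
  have hk := h.k3
  have hvne : ∀ t, v ≠ c t := notOnC_ne hv h
  have hxne : ∀ t, x ≠ c t := notOnC_ne hx h
  have hck : c k = c 0 := by rw [h.eq_iff, Nat.mod_self, Nat.zero_mod]
  set F : ℕ → V := fun u => if u = 0 then v else if u = 1 then x else
    if u ≤ m then c (u - 1) else c u with hF
  have hF0 : F 0 = v := by simp [hF]
  have hF1 : F 1 = x := by simp [hF]
  have hFa : ∀ u, 2 ≤ u → u ≤ m → F u = c (u - 1) := by
    intro u hu1 hu2
    have e1 : ¬ (u = 0) := by omega
    have e2 : ¬ (u = 1) := by omega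
    simp [hF, e1, e2, hu2]
  have hFb : ∀ u, m < u → F u = c u := by
    intro u hu
    have h1 : ¬ (u = 0) := by omega
    have h2 : ¬ (u = 1) := by omega
    have h3 : ¬ (u ≤ m) := by omega
    simp [hF, h1, h2, h3]
  refine ⟨_, mkCyc F (k+1) (by omega) ?_ ?_ ?_⟩
  · intro u hu
    have hbound : u < k := by omega
    rcases show u = 0 ∨ u = 1 ∨ (2 ≤ u ∧ u + 1 ≤ m) ∨ u = m ∨ (m < u) by omega with
      rfl | rfl | ⟨ha, hb⟩ | hum | hgt
    · rw [hF0, hF1]; exact hadjvx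
    · rw [hF1, hFa 2 (by omega) (by omega)]; exact h1
    · rw [hFa u ha (by omega), hFa (u+1) (by omega) hb]
      have := h.adj (u - 1)
      rwa [show u - 1 + 1 = u + 1 - 1 by omega] at this
    · rw [hFa u (by omega) (le_of_eq hum), hFb (u+1) (by omega), hum]
      exact hchord
    · rw [hFb u hgt, hFb (u+1) (by omega)]; exact h.adj u
  · rw [show k + 1 - 1 = k by omega, hFb k (by omega), hF0, hck]
    exact h0.symm
  · intro s t hs ht hst
    have zone : ∀ u, u < k + 1 → u = 0 ∨ u = 1 ∨ (2 ≤ u ∧ u ≤ m) ∨ (m < u ∧ u ≤ k) := by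
      intro u hu; omega
    have hcc : ∀ a b, a < k → b < k → c a = c b → a = b := h.2.2.1
    rcases zone s hs with rfl | rfl | ⟨hs2, hsm⟩ | ⟨hms, hsk⟩ <;>
      rcases zone t ht with rfl | rfl | ⟨ht2, htm⟩ | ⟨hmt, htk⟩
    · rfl
    · rw [hF0, hF1] at hst; exact absurd hst hvx
    · rw [hF0, hFa t ht2 htm] at hst; exact absurd hst (hvne _)
    · rw [hF0, hFb t hmt] at hst
      rcases Nat.lt_or_ge t k with h' | h'
      · exact absurd hst (hvne _)
      · have heq : t = k := by omega
        rw [heq, hck] at hst; exact absurd hst (hvne _)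
    · rw [hF1, hF0] at hst; exact absurd hst.symm hvx
    · rfl
    · rw [hF1, hFa t ht2 htm] at hst; exact absurd hst (hxne _)
    · rw [hF1, hFb t hmt] at hst
      rcases Nat.lt_or_ge t k with h' | h'
      · exact absurd hst (hxne _)
      · have heq : t = k := by omega
        rw [heq, hck] at hst; exact absurd hst (hxne _)
    · rw [hFa s hs2 hsm, hF0] at hst; exact absurd hst.symm (hvne _)
    · rw [hFa s hs2 hsm, hF1] at hst; exact absurd hst.symm (hxne _)
    · rw [hFa s hs2 hsm, hFa t ht2 htm] at hst
      have := hcc _ _ (by omega) (by omega) hst; omega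
    · rw [hFa s hs2 hsm, hFb t hmt] at hst
      rcases Nat.lt_or_ge t k with h' | h'
      · have := hcc _ _ (by omega) (by omega) hst; omega
      · have heq : t = k := by omega
        rw [heq, hck] at hst
        have := hcc _ _ (by omega) (by omega) hst; omega
    · rw [hFb s hms, hF0] at hst
      rcases Nat.lt_or_ge s k with h' | h'
      · exact absurd hst.symm (hvne _)
      · have heq : s = k := by omega
        rw [heq, hck] at hst; exact absurd hst.symm (hvne _)
    · rw [hFb s hms, hF1] at hst
      rcases Nat.lt_or_ge s k with h' | h'
      · exact absurd hst.symm (hxne _)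
      · have heq : s = k := by omega
        rw [heq, hck] at hst; exact absurd hst.symm (hxne _)
    · rw [hFb s hms, hFa t ht2 htm] at hst
      rcases Nat.lt_or_ge s k with h' | h'
      · have := hcc _ _ (by omega) (by omega) hst; omega
      · have heq : s = k := by omega
        rw [heq, hck] at hst
        have := hcc _ _ (by omega) (by omega) hst; omega
    · rcases Nat.lt_or_ge s k with h' | h' <;> rcases Nat.lt_or_ge t k with h'' | h''
      · rw [hFb s hms, hFb t hmt] at hst
        have := hcc _ _ (by omega) (by omega) hst; omega
      · have heq : t = k := by omega
        rw [hFb s hms, hFb t hmt, heq, hck] at hst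
        have := hcc _ _ (by omega) (by omega) hst; omega
      · have heq : s = k := by omega
        rw [hFb s hms, hFb t hmt, heq, hck] at hst
        have := hcc _ _ (by omega) (by omega) hst; omega
      · omega

/-- General-position skip-insertion. -/
lemma cycS (h : IsCyc G c k) (hv : ¬ OnC c k v) (hx : ¬ OnC c k x) (hvx : v ≠ x)
    (hadjvx : G.Adj v x) {i : ℕ} (h0 : G.Adj v (c i)) (h1 : G.Adj x (c (i + 1)))
    {m : ℕ} (hm2 : 2 ≤ m) (hmk : m ≤ k - 1)
    (hchord : G.Adj (c (i + m - 1)) (c (i + m + 1))) : ∃ c', IsCyc G c' (k + 1) := by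
  apply cycS0 (rot h i) (v := v) (x := x) (m := m) _ _ hvx hadjvx _ _ hm2 hmk
  · show G.Adj (c (m - 1 + i)) (c (m + 1 + i))
    rw [show m - 1 + i = i + m - 1 by omega, show m + 1 + i = i + m + 1 by omega]
    exact hchord
  · rw [onC_rot h i]; exact hv
  · rw [onC_rot h i]; exact hx
  · show G.Adj v (c (0 + i)); rwa [Nat.zero_add]
  · show G.Adj x (c (1 + i)); rwa [Nat.add_comm 1 i]

/-- Reroute: `v` outside adjacent to `c 0` and `c j`, with `c j` adjacent to `c 1`
and a chord `c (j-1) – c (j+1)`, gives a `(k+1)`-cycle. -/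
lemma cycD0 (h : IsCyc G c k) (hv : ¬ OnC c k v)
    {j : ℕ} (hj2 : 2 ≤ j) (hjk : j ≤ k - 2)
    (h0 : G.Adj v (c 0)) (hj : G.Adj v (c j)) (hj1 : G.Adj (c j) (c 1))
    (hchord : G.Adj (c (j - 1)) (c (j + 1))) : ∃ c', IsCyc G c' (k + 1) := by
  have hk := h.k3
  have hvne : ∀ t, v ≠ c t := notOnC_ne hv h
  set F : ℕ → V := fun u => if u = 0 then c 0 else if u = 1 then v else
    if u = 2 then c j else if u ≤ j + 1 then c (u - 2) else c (u - 1) with hF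
  have hG0 : F 0 = c 0 := by simp [hF]
  have hG1 : F 1 = v := by simp [hF]
  have hG2 : F 2 = c j := by simp [hF]
  have hGa : ∀ u, 3 ≤ u → u ≤ j + 1 → F u = c (u - 2) := by
    intro u hu1 hu2
    have e1 : ¬ (u = 0) := by omega
    have e2 : ¬ (u = 1) := by omega
    have e3 : ¬ (u = 2) := by omega
    simp [hF, e1, e2, e3, hu2]
  have hGb : ∀ u, j + 2 ≤ u → F u = c (u - 1) := by
    intro u hu1
    have e1 : ¬ (u = 0) := by omega
    have e2 : ¬ (u = 1) := by omega
    have e3 : ¬ (u = 2) := by omega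
    have e4 : ¬ (u ≤ j + 1) := by omega
    simp [hF, e1, e2, e3, e4]
  refine ⟨_, mkCyc F (k+1) (by omega) ?_ ?_ ?_⟩
  · intro u hu
    rcases show u = 0 ∨ u = 1 ∨ u = 2 ∨ (3 ≤ u ∧ u + 1 ≤ j + 1) ∨ u = j + 1 ∨ (j + 2 ≤ u)
        by omega with rfl | rfl | rfl | ⟨ha, hb⟩ | hue | hue
    · rw [hG0, hG1]; exact h0.symm
    · rw [hG1, hG2]; exact hj
    · rw [hG2, hGa 3 (by omega) (by omega)]; exact hj1
    · rw [hGa u ha (by omega), hGa (u+1) (by omega) hb]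
      have := h.adj (u - 2)
      rwa [show u - 2 + 1 = u + 1 - 2 by omega] at this
    · rw [hGa u (by omega) (le_of_eq hue), hGb (u+1) (by omega), hue]
      rw [show j + 1 - 2 = j - 1 by omega, show j + 1 + 1 - 1 = j + 1 by omega]
      exact hchord
    · rw [hGb u hue, hGb (u+1) (by omega)]
      have := h.adj (u - 1)
      rwa [show u - 1 + 1 = u + 1 - 1 by omega] at this
  · rw [show k + 1 - 1 = k by omega, hGb k (by omega), hG0]
    have := h.adj (k - 1)
    rw [show k - 1 + 1 = k by omega, h.mod k, Nat.mod_self] at this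
    exact this
  · have hg : ∀ u, u < k + 1 → u ≠ 1 → ∃ a, F u = c a ∧ a < k ∧
        (u = 0 ∧ a = 0 ∨ u = 2 ∧ a = j ∨ (3 ≤ u ∧ u ≤ j + 1 ∧ a = u - 2) ∨
          (j + 2 ≤ u ∧ u ≤ k ∧ a = u - 1)) := by
      intro u hu hu1
      rcases show u = 0 ∨ u = 2 ∨ (3 ≤ u ∧ u ≤ j + 1) ∨ (j + 2 ≤ u ∧ u ≤ k) by omega with
        rfl | rfl | ⟨ha, hb⟩ | ⟨ha, hb⟩
      · exact ⟨0, hG0, by omega, by omega⟩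
      · exact ⟨j, hG2, by omega, by omega⟩
      · exact ⟨u - 2, hGa u ha hb, by omega, by omega⟩
      · exact ⟨u - 1, hGb u ha, by omega, by omega⟩
    intro s t hs ht hst
    by_cases s1 : s = 1 <;> by_cases t1 : t = 1
    · omega
    · obtain ⟨b, hb1, hb2, hb3⟩ := hg t ht t1
      rw [s1, hG1, hb1] at hst
      exact absurd hst (hvne _)
    · obtain ⟨a, ha1, ha2, ha3⟩ := hg s hs s1
      rw [t1, hG1, ha1] at hst
      exact absurd hst.symm (hvne _)
    · obtain ⟨a, ha1, ha2, ha3⟩ := hg s hs s1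
      obtain ⟨b, hb1, hb2, hb3⟩ := hg t ht t1
      rw [ha1, hb1] at hst
      have := h.2.2.1 _ _ ha2 hb2 hst
      omega

/-- General-position reroute. -/
lemma cycD (h : IsCyc G c k) (hv : ¬ OnC c k v) {i j : ℕ} (hj2 : 2 ≤ j) (hjk : j ≤ k - 2)
    (h0 : G.Adj v (c i)) (hj : G.Adj v (c (i + j))) (hj1 : G.Adj (c (i + j)) (c (i + 1)))
    (hchord : G.Adj (c (i + j - 1)) (c (i + j + 1))) : ∃ c', IsCyc G c' (k + 1) := by
  apply cycD0 (rot h i) (v := v) (j := j) _ hj2 hjk _ _ _ _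
  · rw [onC_rot h i]; exact hv
  · show G.Adj v (c (0 + i)); rwa [Nat.zero_add]
  · show G.Adj v (c (j + i)); rwa [Nat.add_comm j i]
  · show G.Adj (c (j + i)) (c (1 + i))
    rw [Nat.add_comm j i, Nat.add_comm 1 i]; exact hj1
  · show G.Adj (c (j - 1 + i)) (c (j + 1 + i))
    rw [show j - 1 + i = i + j - 1 by omega, show j + 1 + i = i + j + 1 by omega]
    exact hchord

end Constructions

lemma noClaw (hclaw : HFree claw G) {u a b c : V}
    (hua : G.Adj u a) (hub : G.Adj u b) (huc : G.Adj u c)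
    (hab : a ≠ b) (hac : a ≠ c) (hbc : b ≠ c)
    (nab : ¬ G.Adj a b) (nac : ¬ G.Adj a c) (nbc : ¬ G.Adj b c) : False := by
  have nab' : ¬ G.Adj b a := fun h => nab h.symm
  have nac' : ¬ G.Adj c a := fun h => nac h.symm
  have nbc' : ¬ G.Adj c b := fun h => nbc h.symm
  apply hclaw
  refine ⟨⟨⟨![u,a,b,c], ?_⟩, ?_⟩⟩
  · intro i j h
    fin_cases i <;> fin_cases j <;> simp_all [Matrix.cons_val_zero, Matrix.cons_val_one]
    all_goals simp_all [eq_comm]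
  · intro i j
    show G.Adj (![u,a,b,c] i) (![u,a,b,c] j) ↔ claw.Adj i j
    fin_cases i <;> fin_cases j <;>
      simp_all [claw, SimpleGraph.fromRel_adj, G.adj_comm]

section Main

variable {c : ℕ → V} {k : ℕ}

/-- Find an edge crossing into a predicate along a walk. -/
lemma cross {a b : V} (p : G.Walk a b) (P : V → Prop) (ha : ¬ P a) (hb : P b) :
    ∃ x y, G.Adj x y ∧ ¬ P x ∧ P y := by
  induction p with
  | nil => exact absurd hb ha
  | @cons u w b h q ih =>
    by_cases h' : P w
    · exact ⟨_, _, h, ha, h'⟩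
    · exact ih h' hb

/-- The main cycle-extension lemma. -/
lemma extend (hclaw : HFree claw G) (hpaw : PawCondition G) (hconn : G.Connected)
    (hc : IsCyc G c k) (hout : ∃ u, ¬ OnC c k u) : ∃ c', IsCyc G c' (k + 1) := by
  by_contra hno
  have NO : ∀ c', ¬ IsCyc G c' (k + 1) := fun c' h' => hno ⟨c', h'⟩
  have hk := hc.k3
  -- generic insertion-contradiction
  have hEgen : ∀ (e : ℕ → V), IsCyc G e k → ∀ w, ¬ OnC e k w →
      ∀ i, G.Adj w (e i) → G.Adj w (e (i+1)) → False := by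
    intro e he w hw i h1 h2
    obtain ⟨c', hc'⟩ := cycE he hw h1 h2
    exact NO c' hc'
  -- step 0 : find an outside vertex adjacent to the cycle
  obtain ⟨u0, hu0⟩ := hout
  obtain ⟨v0, y, hady, hv0, hy⟩ := cross ((hconn.preconnected u0 (c 0)).some) (OnC c k) hu0 (onC_c hc 0)
  obtain ⟨t0, ht0, rfl⟩ := hy
  -- normalize: rotate so that v is adjacent to position 0
  set d : ℕ → V := fun t => c (t + t0) with hdd
  have hd : IsCyc G d k := rot hc t0
  have hvD : ¬ OnC d k v0 := by rw [hdd, onC_rot hc t0]; exact hv0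
  have hv0d : G.Adj v0 (d 0) := by
    show G.Adj v0 (c (0 + t0)); rwa [Nat.zero_add]
  clear hady hu0 ht0
  -- basic facts about d
  have hdk : d k = d 0 := by rw [hd.eq_iff, Nat.mod_self, Nat.zero_mod]
  have hdadj0k : G.Adj (d 0) (d (k-1)) := by
    have := hd.adj (k-1)
    rw [show k - 1 + 1 = k by omega, hdk] at this
    exact this.symm
  have hnv1 : ¬ G.Adj v0 (d 1) := fun h' => hEgen d hd v0 hvD 0 hv0d h'
  have hnvk : ¬ G.Adj v0 (d (k-1)) := by
    intro h'
    refine hEgen d hd v0 hvD (k-1) h' ?_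
    rwa [show k - 1 + 1 = k by omega, hdk]
  have hne_ind : ∀ a b : ℕ, a < k → b < k → a ≠ b → d a ≠ d b := by
    intro a b ha hb hab heq
    have := hd.eq_iff.mp heq
    rw [Nat.mod_eq_of_lt ha, Nat.mod_eq_of_lt hb] at this
    omega
  -- the chord around position 0
  have chord0 : G.Adj (d (k-1)) (d 1) := by
    by_contra hch
    exact noClaw hclaw hv0d.symm hdadj0k (hd.adj 0)
      (notOnC_ne hvD hd (k-1)) (notOnC_ne hvD hd 1)
      (hne_ind (k-1) 1 (by omega) (by omega) (by omega)) hnvk hnv1 hch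
  -- the first paw
  obtain ⟨x, hxset, hxv, hxor⟩ := hpaw v0 (d 0) (d (k-1)) (d 1) hv0d hdadj0k (hd.adj 0)
    chord0 hnvk hnv1 (notOnC_ne hvD hd (k-1)) (notOnC_ne hvD hd 1)
  simp only [Set.mem_insert_iff, Set.mem_singleton_iff, not_or] at hxset
  obtain ⟨hxnev, hxne0, hxnek1, hxne1⟩ := hxset
  by_cases hxC : OnC d k x
  · -- the common neighbour lies on the cycle : reroute
    obtain ⟨j0, hj0k, rfl⟩ := hxC
    have hj00 : j0 ≠ 0 := fun h => hxne0 (by rw [h])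
    have hj01 : j0 ≠ 1 := fun h => hxne1 (by rw [h])
    have hj0k1 : j0 ≠ k - 1 := fun h => hxnek1 (by rw [h])
    have hj02 : 2 ≤ j0 := by omega
    have hj0k2 : j0 ≤ k - 2 := by omega
    have hvj0 : G.Adj v0 (d j0) := hxv.symm
    have hnvjm : ¬ G.Adj v0 (d (j0 - 1)) := by
      intro h'
      refine hEgen d hd v0 hvD (j0 - 1) h' ?_
      rwa [show j0 - 1 + 1 = j0 by omega]
    have hnvjp : ¬ G.Adj v0 (d (j0 + 1)) := fun h' => hEgen d hd v0 hvD j0 hvj0 h'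
    have hdjm : G.Adj (d j0) (d (j0 - 1)) := by
      have := hd.adj (j0 - 1)
      rw [show j0 - 1 + 1 = j0 by omega] at this
      exact this.symm
    have chordj : G.Adj (d (j0 - 1)) (d (j0 + 1)) := by
      by_contra hch
      exact noClaw hclaw hxv hdjm (hd.adj j0) (notOnC_ne hvD hd (j0-1))
        (notOnC_ne hvD hd (j0+1))
        (hne_ind (j0-1) (j0+1) (by omega) (by omega) (by omega)) hnvjm hnvjp hch
    rcases hxor with hxk | hx1
    · -- x = d j0 adjacent to d (k-1) : reroute in the reversed cycle
      set r : ℕ → V := fun t => d (k - t % k) with hrr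
      have hr : IsCyc G r k := rev hd
      have hvR : ¬ OnC r k v0 := by rw [hrr, onC_rev hd]; exact hvD
      set j' := k - j0 with hj'
      have hj'2 : 2 ≤ j' := by omega
      have hj'k2 : j' ≤ k - 2 := by omega
      have hr0 : r 0 = d 0 := by
        show d (k - 0 % k) = d 0
        rw [Nat.zero_mod, Nat.sub_zero, hdk]
      have hrj' : r j' = d j0 := by
        show d (k - j' % k) = d j0
        rw [Nat.mod_eq_of_lt (by omega), show k - j' = j0 by omega]
      have hr1 : r 1 = d (k - 1) := by
        show d (k - 1 % k) = d (k-1)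
        rw [Nat.mod_eq_of_lt (by omega)]
      have hrjm : r (j' - 1) = d (j0 + 1) := by
        show d (k - (j' - 1) % k) = d (j0 + 1)
        rw [Nat.mod_eq_of_lt (by omega), show k - (j' - 1) = j0 + 1 by omega]
      have hrjp : r (j' + 1) = d (j0 - 1) := by
        show d (k - (j' + 1) % k) = d (j0 - 1)
        rw [Nat.mod_eq_of_lt (by omega), show k - (j' + 1) = j0 - 1 by omega]
      obtain ⟨c', hc'⟩ := cycD0 hr hvR hj'2 hj'k2 (hr0 ▸ hv0d) (hrj' ▸ hvj0)
        (by rw [hrj', hr1]; exact hxk) (by rw [hrjm, hrjp]; exact chordj.symm)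
      exact NO c' hc'
    · -- x = d j0 adjacent to d 1 : direct reroute
      obtain ⟨c', hc'⟩ := cycD0 hd hvD hj02 hj0k2 hv0d hvj0 hx1 chordj
      exact NO c' hc'
  · -- the common neighbour x is outside the cycle
    -- build the frame e: v adjacent to e 0, x adjacent to e 1
    have hxv' : G.Adj v0 x := hxv.symm
    have hvx : v0 ≠ x := hxv'.ne
    obtain ⟨e, he, hev, hex, hv0e, hx1e⟩ :
        ∃ e, IsCyc G e k ∧ ¬ OnC e k v0 ∧ ¬ OnC e k x ∧ G.Adj v0 (e 0) ∧ G.Adj x (e 1) := by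
      rcases hxor with hxk | hx1
      · -- x adjacent to d (k-1): use the reversed cycle
        refine ⟨fun t => d (k - t % k), rev hd, ?_, ?_, ?_, ?_⟩
        · rw [onC_rev hd]; exact hvD
        · rw [onC_rev hd]; exact hxC
        · show G.Adj v0 (d (k - 0 % k))
          rw [Nat.zero_mod, Nat.sub_zero, hdk]; exact hv0d
        · show G.Adj x (d (k - 1 % k))
          rw [Nat.mod_eq_of_lt (by omega)]; exact hxk
      · exact ⟨d, hd, hvD, hxC, hv0d, hx1⟩
    clear hxor hnv1 hnvk chord0 hdadj0k hxne0 hxne1 hxnek1 hv0d hvD hxC hdk hne_ind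
    -- basic facts about e
    have hek : e k = e 0 := by rw [he.eq_iff, Nat.mod_self, Nat.zero_mod]
    have hne_e : ∀ a b : ℕ, a < k → b < k → a ≠ b → e a ≠ e b := by
      intro a b ha hb hab heq
      have := he.eq_iff.mp heq
      rw [Nat.mod_eq_of_lt ha, Nat.mod_eq_of_lt hb] at this
      omega
    -- step 5 : every outside vertex attaches only at positions 0 or 1
    have step5 : ∀ w, ¬ OnC e k w → ∀ m, 2 ≤ m → m ≤ k - 1 → ¬ G.Adj w (e m) := by
      intro w hw m hm2 hmk hadj
      have hnw1 : ¬ G.Adj w (e (m-1)) := by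
        intro h'
        refine hEgen e he w hw (m-1) h' ?_
        rwa [show m - 1 + 1 = m by omega]
      have hnw2 : ¬ G.Adj w (e (m+1)) := fun h' => hEgen e he w hw m hadj h'
      have hemm : G.Adj (e m) (e (m-1)) := by
        have := he.adj (m-1)
        rw [show m - 1 + 1 = m by omega] at this
        exact this.symm
      have hne_mm : e (m-1) ≠ e (m+1) := by
        intro heq
        have := he.eq_iff.mp heq
        rw [Nat.mod_eq_of_lt (by omega)] at this
        rcases Nat.lt_or_ge (m+1) k with h' | h'
        · rw [Nat.mod_eq_of_lt h'] at this; omega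
        · have hmk' : m + 1 = k := by omega
          rw [hmk', Nat.mod_self] at this; omega
      have hch : G.Adj (e (m-1)) (e (m+1)) := by
        by_contra hch
        exact noClaw hclaw hadj.symm hemm (he.adj m)
          (notOnC_ne hw he (m-1)) (notOnC_ne hw he (m+1)) hne_mm hnw1 hnw2 hch
      obtain ⟨c', hc'⟩ := cycS0 he hev hex hvx hxv' hv0e hx1e hm2 hmk hch
      exact NO c' hc'
    -- small case : k = 3
    rcases Nat.lt_or_ge k 4 with hk4 | hk4
    · have hk3' : k = 3 := by omega
      have hch : G.Adj (e (2-1)) (e (2+1)) := by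
        rw [show (2:ℕ)+1 = 3 by rfl, show (3:ℕ) = k by omega, hek]
        exact (he.adj 0).symm
      obtain ⟨c', hc'⟩ := cycS0 he hev hex hvx hxv' hv0e hx1e (le_refl 2) (by omega) hch
      exact NO c' hc'
    -- k ≥ 4 : derive the two chords and apply the final paw
    have hnx0 : ¬ G.Adj x (e 0) := fun h' => hEgen e he x hex 0 h' hx1e
    have hnx2 : ¬ G.Adj x (e 2) := fun h' => hEgen e he x hex 1 hx1e h'
    have chord1 : G.Adj (e 0) (e 2) := by
      by_contra hch
      exact noClaw hclaw hx1e.symm (he.adj 0).symm (he.adj 1)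
        (notOnC_ne hex he 0) (notOnC_ne hex he 2)
        (hne_e 0 2 (by omega) (by omega) (by omega)) hnx0 hnx2 hch
    have hnvk1 : ¬ G.Adj v0 (e (k-1)) := by
      intro h'
      refine hEgen e he v0 hev (k-1) h' ?_
      rwa [show k - 1 + 1 = k by omega, hek]
    have hnv2 : ¬ G.Adj v0 (e 2) := step5 v0 hev 2 (by omega) (by omega)
    have headj0k : G.Adj (e 0) (e (k-1)) := by
      have := he.adj (k-1)
      rw [show k - 1 + 1 = k by omega, hek] at this
      exact this.symm
    have chord2 : G.Adj (e (k-1)) (e 2) := by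
      by_contra hch
      exact noClaw hclaw hv0e.symm headj0k chord1
        (notOnC_ne hev he (k-1)) (notOnC_ne hev he 2)
        (hne_e (k-1) 2 (by omega) (by omega) (by omega)) hnvk1 hnv2 hch
    -- the final paw
    obtain ⟨w, hwset, hwv, hwor⟩ := hpaw v0 (e 0) (e (k-1)) (e 2) hv0e headj0k chord1
      chord2 hnvk1 hnv2 (notOnC_ne hev he (k-1)) (notOnC_ne hev he 2)
    simp only [Set.mem_insert_iff, Set.mem_singleton_iff, not_or] at hwset
    obtain ⟨hwnev, hwne0, hwnek1, hwne2⟩ := hwset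
    by_cases hwC : OnC e k w
    · obtain ⟨t, htk, rfl⟩ := hwC
      rcases show t = 0 ∨ t = 1 ∨ (2 ≤ t ∧ t ≤ k - 1) by omega with rfl | rfl | ⟨ht2, htk1⟩
      · exact hwne0 rfl
      · exact hEgen e he v0 hev 0 hv0e hwv.symm
      · exact step5 v0 hev t ht2 htk1 hwv.symm
    · rcases hwor with hw1 | hw2
      · exact step5 w hwC (k-1) (by omega) (by omega) hw1
      · exact step5 w hwC 2 (by omega) (by omega) hw2

end Main



section WalkConv

variable {c : ℕ → V} {k : ℕ}

/-- A walk along `c` from position `a` of length `n`. -/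
def mkWalk (c : ℕ → V) (hadj : ∀ t, G.Adj (c t) (c (t + 1))) (a : ℕ) :
    (n : ℕ) → G.Walk (c a) (c (a + n))
  | 0 => Walk.nil
  | n + 1 => (mkWalk c hadj a n).concat (by rw [show a + (n+1) = (a+n)+1 by omega]; exact hadj _)

lemma mkWalk_support (c : ℕ → V) (hadj : ∀ t, G.Adj (c t) (c (t + 1))) (a n : ℕ) :
    (mkWalk (G := G) c hadj a n).support = (List.range (n+1)).map (fun t => c (a + t)) := by
  induction n with
  | zero => simp [mkWalk, List.range_succ]
  | succ n ih =>
    rw [mkWalk, Walk.support_concat, ih]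
    simp [List.range_succ]

lemma mkWalk_edges (c : ℕ → V) (hadj : ∀ t, G.Adj (c t) (c (t + 1))) (a n : ℕ) :
    (mkWalk (G := G) c hadj a n).edges
      = (List.range n).map (fun t => s(c (a + t), c (a + t + 1))) := by
  induction n with
  | zero => simp [mkWalk]
  | succ n ih =>
    rw [mkWalk, Walk.edges_concat, ih, List.range_succ]
    simp [show a + (n + 1) = a + n + 1 by omega]

lemma mkWalk_length (c : ℕ → V) (hadj : ∀ t, G.Adj (c t) (c (t + 1))) (a n : ℕ) :
    (mkWalk (G := G) c hadj a n).length = n := by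
  induction n with
  | zero => rfl
  | succ n ih => rw [mkWalk, Walk.length_concat, ih]

/-- From a combinatorial cycle to a genuine cycle walk. -/
lemma toWalkCycle (h : IsCyc G c k) :
    ∃ (a : V) (p : G.Walk a a), p.IsCycle ∧ p.length = k ∧
      (∀ u, OnC c k u → u ∈ p.support) ∧
      (∀ i, i < k → s(c i, c (i + 1)) ∈ p.edges) := by
  have hk := h.k3
  have hck : c (0 + k) = c 0 := by rw [h.eq_iff]; simp
  set p0 : G.Walk (c 0) (c (0 + k)) := mkWalk c h.adj 0 k with hp0
  set p : G.Walk (c 0) (c 0) := p0.copy rfl hck with hp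
  have hsupp : p.support = (List.range (k+1)).map (fun t => c t) := by
    rw [hp, Walk.support_copy, hp0, mkWalk_support]
    simp
  have hedges : p.edges = (List.range k).map (fun t => s(c t, c (t + 1))) := by
    rw [hp, Walk.edges_copy, hp0, mkWalk_edges]
    simp
  have hlen : p.length = k := by rw [hp, Walk.length_copy, hp0, mkWalk_length]
  refine ⟨c 0, p, ⟨⟨⟨?_⟩, ?_⟩, ?_⟩, hlen, ?_, ?_⟩
  · -- edges nodup
    rw [hedges]
    rw [List.nodup_map_iff_inj_on List.nodup_range]
    intro a ha b hb heq
    simp only [List.mem_range] at ha hb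
    rw [Sym2.eq_iff] at heq
    rcases heq with ⟨h1, h2⟩ | ⟨h1, h2⟩
    · have := h.eq_iff.mp h1
      rw [Nat.mod_eq_of_lt ha, Nat.mod_eq_of_lt hb] at this
      omega
    · have e1 := h.eq_iff.mp h1
      have e2 := h.eq_iff.mp h2
      rw [Nat.mod_eq_of_lt ha] at e1
      rw [Nat.mod_eq_of_lt hb] at e2
      have m1 : (b + 1) % k = if b + 1 = k then 0 else b + 1 := by
        split
        · next hh => rw [hh, Nat.mod_self]
        · next hh => exact Nat.mod_eq_of_lt (by omega)
      have m2 : (a + 1) % k = if a + 1 = k then 0 else a + 1 := by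
        split
        · next hh => rw [hh, Nat.mod_self]
        · next hh => exact Nat.mod_eq_of_lt (by omega)
      rw [m1] at e1
      rw [m2] at e2
      split at e1 <;> split at e2 <;> omega
  · -- not nil
    intro hnil
    have := hlen
    rw [hnil] at this
    simp at this
    omega
  · -- support tail nodup
    have htail : p.support.tail = (List.range k).map (fun t => c (t + 1)) := by
      rw [hsupp]
      rw [show k + 1 = 1 + k by omega, List.range_add]
      have hr1 : List.range 1 = [0] := by decide
      simp only [List.map_append, hr1, List.map_cons, List.map_nil, List.map_map,
        List.singleton_append, List.tail_cons]
      simp [Function.comp_def, Nat.add_comm]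
    rw [htail]
    rw [List.nodup_map_iff_inj_on List.nodup_range]
    intro a ha b hb heq
    simp only [List.mem_range] at ha hb
    have := h.eq_iff.mp heq
    have m1 : (a + 1) % k = if a + 1 = k then 0 else a + 1 := by
      split
      · next hh => rw [hh, Nat.mod_self]
      · next hh => exact Nat.mod_eq_of_lt (by omega)
    have m2 : (b + 1) % k = if b + 1 = k then 0 else b + 1 := by
      split
      · next hh => rw [hh, Nat.mod_self]
      · next hh => exact Nat.mod_eq_of_lt (by omega)
    rw [m1, m2] at this
    split at this <;> split at this <;> omega
  · -- support coverage
    rintro u ⟨t, htk, rfl⟩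
    rw [hsupp]
    simp only [List.mem_map, List.mem_range]
    exact ⟨t, by omega, rfl⟩
  · -- edges coverage
    intro i hi
    rw [hedges]
    simp only [List.mem_map, List.mem_range]
    exact ⟨i, hi, rfl⟩

end WalkConv



section WalkConv2

/-- From a cycle walk to a combinatorial cycle. -/
lemma ofWalkCycle {b : V} (cw : G.Walk b b) (hcw : cw.IsCycle) :
    ∃ c, IsCyc G c cw.length ∧ ∀ u, OnC c cw.length u → u ∈ cw.support := by
  have h3 := hcw.three_le_length
  set l : List V := cw.support.tail with hl
  have hlen : l.length = cw.length := by
    rw [hl, List.length_tail, Walk.length_support]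
    omega
  have hlpos : 0 < l.length := by omega
  have hmodlt : ∀ t : ℕ, t % cw.length < l.length := by
    intro t; rw [hlen]; exact Nat.mod_lt _ (by omega)
  set c : ℕ → V := fun t => l.get ⟨t % cw.length, hmodlt t⟩ with hc
  have hsupcons : cw.support = b :: l := by
    rw [hl]; exact (cw.support_eq_cons)
  have hchain : List.IsChain G.Adj (b :: l) := by
    have h' := cw.isChain_adj_support
    rw [hsupcons] at h'
    exact h'
  obtain ⟨hhead, hstep⟩ : (∀ h : 0 < l.length, G.Adj b (l.get ⟨0, h⟩)) ∧
      ∀ (i : ℕ) (h : i < l.length - 1),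
        G.Adj (l.get ⟨i, by omega⟩) (l.get ⟨i + 1, by omega⟩) := by
    rw [List.isChain_iff_getElem] at hchain
    exact ⟨fun h => hchain 0 (by simp; omega), fun i h => hchain (i + 1) (by simp; omega)⟩
  have hget : ∀ (i j : ℕ) (hi : i < l.length) (hj : j < l.length), i = j →
      l.get ⟨i, hi⟩ = l.get ⟨j, hj⟩ := by
    intro i j hi hj hij; subst hij; rfl
  have hlast : l.get ⟨l.length - 1, by omega⟩ = b := by
    have hlne : l ≠ [] := List.ne_nil_of_length_pos hlpos
    have h1 := cw.getLast_support
    have h2 : cw.support.getLast (by simp) = l.getLast hlne := by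
      rw [List.getLast_congr _ (by simp) hsupcons, List.getLast_cons hlne]
    rw [h2] at h1
    exact (List.getLast_eq_getElem hlne).symm.trans h1
  refine ⟨c, ⟨h3, fun t => ?_, fun s t hs ht hst => ?_, fun t => ?_⟩, ?_⟩
  · exact hget _ _ _ _ (Nat.add_mod_right t cw.length)
  · have hinj := List.nodup_iff_injective_get.mp hcw.support_nodup
    have h2 := congrArg Fin.val (hinj hst)
    simp only at h2
    rwa [Nat.mod_eq_of_lt hs, Nat.mod_eq_of_lt ht] at h2
  · have hu : t % cw.length < cw.length := Nat.mod_lt _ (by omega)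
    have hsucc : (t+1) % cw.length =
        if t % cw.length = cw.length - 1 then 0 else t % cw.length + 1 :=
      succMod _ _ (by omega)
    show G.Adj (l.get _) (l.get _)
    rcases Nat.lt_or_ge (t % cw.length) (cw.length - 1) with hlt | hge
    · have he : (t+1) % cw.length = t % cw.length + 1 := by
        rw [hsucc, if_neg (by omega)]
      rw [hget ((t+1) % cw.length) (t % cw.length + 1) (hmodlt _) (by omega) he]
      exact hstep (t % cw.length) (by omega)
    · have hteq : t % cw.length = cw.length - 1 := by omega
      have he : (t+1) % cw.length = 0 := by rw [hsucc, if_pos hteq]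
      rw [hget (t % cw.length) (l.length - 1) (hmodlt _) (by omega) (by omega), hlast,
        hget ((t+1) % cw.length) 0 (hmodlt _) (by omega) he]
      exact hhead hlpos
  · rintro u ⟨t, htk, rfl⟩
    show l.get _ ∈ cw.support
    rw [hsupcons]
    exact List.mem_cons_of_mem _ (List.get_mem _ _)

end WalkConv2

section Pieces

variable {c : ℕ → V} {k : ℕ}

lemma cyc_le_card [Fintype V] (h : IsCyc G c k) : k ≤ Fintype.card V := by
  classical
  have hinj : Function.Injective (fun t : Fin k => c t) := by
    intro s t hst
    exact Fin.ext (h.2.2.1 _ _ s.2 t.2 hst)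
  calc k = Fintype.card (Fin k) := (Fintype.card_fin k).symm
  _ ≤ Fintype.card V := Fintype.card_le_of_injective _ hinj

lemma exists_outside [Fintype V] (h : IsCyc G c k) (hlt : k < Fintype.card V) :
    ∃ u, ¬ OnC c k u := by
  classical
  by_contra hno
  push_neg at hno
  have hsurj : Function.Surjective (fun t : Fin k => c t) := by
    intro u
    obtain ⟨t, htk, rfl⟩ := hno u
    exact ⟨⟨t, htk⟩, rfl⟩
  have := Fintype.card_le_of_surjective _ hsurj
  rw [Fintype.card_fin] at this
  omega

lemma triCyc {p q r : V} (hpq : G.Adj p q) (hqr : G.Adj q r) (hrp : G.Adj r p) :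
    ∃ c', IsCyc G c' 3 := by
  set F : ℕ → V := fun u => if u = 0 then p else if u = 1 then q else r with hF
  refine ⟨_, mkCyc F 3 (le_refl 3) ?_ ?_ ?_⟩
  · intro u hu
    have : u = 0 ∨ u = 1 := by omega
    rcases this with rfl | rfl
    · simpa [hF] using hpq
    · simpa [hF] using hqr
  · simpa [hF] using hrp
  · intro s t hs ht hst
    have hs' : s = 0 ∨ s = 1 ∨ s = 2 := by omega
    have ht' : t = 0 ∨ t = 1 ∨ t = 2 := by omega
    rcases hs' with rfl | rfl | rfl <;> rcases ht' with rfl | rfl | rfl <;> simp_all [hF] <;>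
      first
      | rfl
      | (exact absurd hst hpq.ne)
      | (exact absurd hst hqr.ne)
      | (exact absurd hst.symm hqr.ne)
      | (exact absurd hst.symm hpq.ne)
      | (exact absurd hst hrp.ne')
      | (exact absurd hst.symm hrp.ne')

/-- First edge of a walk between distinct vertices. -/
lemma firstStep {W : Type*} {H : SimpleGraph W} {a b : W} (p : H.Walk a b) (hab : a ≠ b) :
    ∃ y, H.Adj a y := by
  cases p with
  | nil => exact absurd rfl hab
  | cons h _ => exact ⟨_, h⟩

/-- In a 2-connected graph every vertex has two distinct neighbours. -/
lemma twoNbrs (h2 : TwoConnected G) (v : V) : ∃ a b, a ≠ b ∧ G.Adj v a ∧ G.Adj v b := by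
  obtain ⟨⟨p, q, r, hpq, hpr, hqr⟩, hconn, hdel⟩ := h2
  have hex : ∃ u, u ≠ v := by
    by_cases h : p = v
    · exact ⟨q, by rintro rfl; exact hpq h⟩
    · exact ⟨p, h⟩
  obtain ⟨u1, hu1⟩ := hex
  obtain ⟨a, ha⟩ := firstStep ((hconn.preconnected v u1).some) (Ne.symm hu1)
  have hva : v ≠ a := ha.ne
  have hw : ∃ w, w ≠ v ∧ w ≠ a := by
    by_cases h : p = v ∨ p = a
    · by_cases h' : q = v ∨ q = a
      · refine ⟨r, ?_, ?_⟩ <;> rcases h with rfl | rfl <;> rcases h' with rfl | rfl <;>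
          first
          | (intro hh; exact hqr hh.symm ▸ (by tauto))
          | tauto
      · push_neg at h'
        exact ⟨q, h'.1, h'.2⟩
    · push_neg at h
      exact ⟨p, h.1, h.2⟩
  obtain ⟨w, hwv, hwa⟩ := hw
  have hconn' := hdel a
  have hvmem : v ∈ {u | u ≠ a} := hva
  have hwmem : w ∈ {u | u ≠ a} := hwa
  obtain ⟨y, hy⟩ := firstStep ((hconn'.preconnected ⟨v, hvmem⟩ ⟨w, hwmem⟩).some)
    (by simp only [ne_eq, Subtype.mk.injEq]; intro hh; exact hwv hh.symm)
  rw [SimpleGraph.comap_adj] at hy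
  exact ⟨a, y.1, fun heq => y.2 heq.symm, ha, hy⟩

end Pieces

section FindCycle

/-- A path with endpoint `b` contains at most one edge at `b`. -/
lemma endUnique {a b y z : V} (p : G.Walk a b) (hp : p.IsPath)
    (hy : s(y, b) ∈ p.edges) (hz : s(z, b) ∈ p.edges) : y = z := by
  induction p with
  | nil => simp at hy
  | @cons a w b h q ih =>
    rw [Walk.cons_isPath_iff] at hp
    rw [Walk.edges_cons, List.mem_cons] at hy hz
    have hqnil : ∀ (x : V), s(x, b) = s(a, w) → q.edges = [] ∧ x = a := by
      intro x hx
      rw [Sym2.eq_iff] at hx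
      rcases hx with ⟨rfl, rfl⟩ | ⟨rfl, rfl⟩
      · -- b = w : q is a path from b to b, so nil
        cases q with
        | nil => exact ⟨rfl, rfl⟩
        | cons h' q' =>
          exfalso
          rw [Walk.cons_isPath_iff] at hp
          exact hp.1.2 (Walk.end_mem_support q')
      · -- b = a : a appears at the end of q's support
        exfalso
        exact hp.2 (Walk.end_mem_support q)
    rcases hy with hy | hy <;> rcases hz with hz | hz
    · obtain ⟨-, rfl⟩ := hqnil _ hy
      obtain ⟨-, rfl⟩ := hqnil _ hz
      rfl
    · obtain ⟨hqe, rfl⟩ := hqnil _ hy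
      rw [hqe] at hz
      simp at hz
    · obtain ⟨hqe, rfl⟩ := hqnil _ hz
      rw [hqe] at hy
      simp at hy
    · exact ih hp.1 hy hz

lemma isPath_concat {a b y : V} (p : G.Walk a b) (hp : p.IsPath) (h : G.Adj b y)
    (hy : y ∉ p.support) : (p.concat h).IsPath := by
  rw [Walk.isPath_def, Walk.support_concat, List.nodup_append]
  refine ⟨hp.support_nodup, List.nodup_singleton y, ?_⟩
  intro u hu w hu' heq
  rw [List.mem_singleton] at hu'
  subst hu' heq
  exact hy hu

lemma findCycleAux [Fintype V] (h2 : TwoConnected G) :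
    ∀ (n : ℕ) (a b : V) (p : G.Walk a b), p.IsPath → Fintype.card V ≤ p.length + n →
      ∃ (b' : V) (cw : G.Walk b' b'), cw.IsCycle := by
  classical
  intro n
  induction n with
  | zero =>
    intro a b p hp hcard
    have := hp.length_lt
    omega
  | succ n ih =>
    intro a b p hp hcard
    obtain ⟨y, z, hyz, hby, hbz⟩ := twoNbrs h2 b
    by_cases hymem : y ∈ p.support
    · by_cases hzmem : z ∈ p.support
      · -- both neighbours on the path : extract a cycle
        have hkey : ¬ (s(y, b) ∈ p.edges ∧ s(z, b) ∈ p.edges) := by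
          rintro ⟨h1, h2'⟩
          exact hyz (endUnique p hp h1 h2')
        -- pick the neighbour whose edge to b is not on p
        obtain ⟨w, hwmem, hbw, hwedge⟩ :
            ∃ w, w ∈ p.support ∧ G.Adj b w ∧ s(w, b) ∉ p.edges := by
          by_cases h1 : s(y, b) ∈ p.edges
          · exact ⟨z, hzmem, hbz, fun h' => hkey ⟨h1, h'⟩⟩
          · exact ⟨y, hymem, hby, h1⟩
        set r := p.dropUntil w hwmem with hr
        have hrpath : r.IsPath := hp.dropUntil hwmem
        have hredges : ∀ e, e ∈ r.edges → e ∈ p.edges :=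
          fun e he => Walk.edges_dropUntil_subset p hwmem he
        refine ⟨b, Walk.cons hbw r, (Walk.cons_isCycle_iff r hbw).mpr ⟨hrpath, ?_⟩⟩
        intro hmem
        apply hwedge
        apply hredges
        rwa [Sym2.eq_swap] at hmem
      · -- extend the path by z
        exact ih a z (p.concat hbz) (isPath_concat p hp hbz hzmem)
          (by rw [Walk.length_concat]; omega)
    · exact ih a y (p.concat hby) (isPath_concat p hp hby hymem)
        (by rw [Walk.length_concat]; omega)

end FindCycle

lemma exists_cycle [Fintype V] (h2 : TwoConnected G) :
    ∃ (b : V) (cw : G.Walk b b), cw.IsCycle := by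
  obtain ⟨p, q, r, _, _, _⟩ := h2.1
  exact findCycleAux h2 (Fintype.card V) p p Walk.nil (by simp [Walk.isPath_def]) (by simp)

theorem main {V : Type} [Fintype V] (G : SimpleGraph V)
    (h2 : TwoConnected G) (hclaw : HFree claw G) (hpaw : PawCondition G) :
    (∀ s : ℕ, 3 ≤ s → s ≤ Fintype.card V →
      ∃ (a : V) (p : G.Walk a a), p.IsCycle ∧ p.length = s) ∨
    (∃ (a : V) (p : G.Walk a a), p.IsCycle ∧ (∀ v : V, v ∈ p.support) ∧
      ∀ e ∈ G.edgeSet, e ∈ p.edges) := by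
  classical
  have hconn := h2.2.1
  by_cases hdeg : ∃ u a b c', G.Adj u a ∧ G.Adj u b ∧ G.Adj u c' ∧ a ≠ b ∧ a ≠ c' ∧ b ≠ c'
  · left
    obtain ⟨u, a, b, c', hua, hub, huc, hab, hac, hbc⟩ := hdeg
    have htri : ∃ d, IsCyc G d 3 := by
      by_cases h1 : G.Adj a b
      · exact triCyc hua h1 hub.symm
      · by_cases hh2 : G.Adj a c'
        · exact triCyc hua hh2 huc.symm
        · by_cases h3 : G.Adj b c'
          · exact triCyc hub h3 huc.symm
          · exact (noClaw hclaw hua hub huc hab hac hbc h1 hh2 h3).elim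
    have key : ∀ s, 3 ≤ s → s ≤ Fintype.card V → ∃ d, IsCyc G d s := by
      intro s hs3
      induction s, hs3 using Nat.le_induction with
      | base => intro _; exact htri
      | succ s hs ih =>
        intro hsn
        obtain ⟨d, hd⟩ := ih (by omega)
        exact extend hclaw hpaw hconn hd (exists_outside hd (by omega))
    intro s hs3 hsn
    obtain ⟨d, hd⟩ := key s hs3 hsn
    obtain ⟨a', p, hcyc, hlen, -, -⟩ := toWalkCycle hd
    exact ⟨a', p, hcyc, hlen⟩
  · right
    obtain ⟨b0, cw, hcw⟩ := exists_cycle h2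
    obtain ⟨c0, hc0, -⟩ := ofWalkCycle cw hcw
    have hk0n : cw.length ≤ Fintype.card V := cyc_le_card hc0
    have key : ∀ m, cw.length ≤ m → m ≤ Fintype.card V → ∃ d, IsCyc G d m := by
      intro m hm
      induction m, hm using Nat.le_induction with
      | base => intro _; exact ⟨c0, hc0⟩
      | succ m hm ih =>
        intro hmn
        obtain ⟨d, hd⟩ := ih (by omega)
        exact extend hclaw hpaw hconn hd (exists_outside hd (by omega))
    obtain ⟨d, hd⟩ := key (Fintype.card V) hk0n (le_refl _)
    set n := Fintype.card V with hn
    have hn3 : 3 ≤ n := hd.k3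
    have hsurj : ∀ u : V, OnC d n u := by
      have hinj : Function.Injective (fun t : Fin n => d t) :=
        fun s t hst => Fin.ext (hd.2.2.1 _ _ s.2 t.2 hst)
      have hbij : Function.Bijective (fun t : Fin n => d t) :=
        (Fintype.bijective_iff_injective_and_card _).mpr ⟨hinj, by simp [hn]⟩
      intro u
      obtain ⟨t, ht⟩ := hbij.2 u
      exact ⟨t.1, t.2, ht.symm⟩
    obtain ⟨a', p, hcyc, hlen, hsup, hedge⟩ := toWalkCycle hd
    refine ⟨a', p, hcyc, fun v => hsup v (hsurj v), ?_⟩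
    intro e he
    revert he
    induction e using Sym2.ind with
    | _ u w =>
      intro he
      rw [SimpleGraph.mem_edgeSet] at he
      obtain ⟨t, htn, rfl⟩ := hsurj u
      have hA : G.Adj (d t) (d (t+1)) := hd.adj t
      have hB : G.Adj (d t) (d (t + (n-1))) := by
        have := hd.adj (t + (n-1))
        rw [show t + (n-1) + 1 = t + n by omega, hd.2.1 t] at this
        exact this.symm
      have hAB : d (t+1) ≠ d (t + (n-1)) := by
        intro heq
        have hmm := hd.eq_iff.mp heq
        have m1 : (t+1) % n = if t+1 = n then 0 else t+1 := by
          split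
          · next hh => rw [hh, Nat.mod_self]
          · next hh => exact Nat.mod_eq_of_lt (by omega)
        have m2 : (t + (n-1)) % n = if t = 0 then n-1 else t-1 := by
          split
          · next hh => rw [hh, Nat.zero_add]; exact Nat.mod_eq_of_lt (by omega)
          · next hh =>
              rw [show t + (n-1) = (t-1) + n by omega, Nat.add_mod_right]
              exact Nat.mod_eq_of_lt (by omega)
        rw [m1, m2] at hmm
        split at hmm <;> split at hmm <;> omega
      by_cases hw1 : w = d (t+1)
      · subst hw1; exact hedge t htn
      · by_cases hw2 : w = d (t + (n-1))
        · subst hw2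
          set i := (t + (n-1)) % n with hi
          have hin : i < n := Nat.mod_lt _ (by omega)
          have hv1 : d i = d (t + (n-1)) := (hd.mod _).symm
          have hv2 : d (i+1) = d t := by
            rw [hd.eq_iff]
            calc (i+1) % n = ((t + (n-1)) % n + 1) % n := by rw [hi]
            _ = ((t + (n-1)) + 1) % n := by rw [Nat.mod_add_mod]
            _ = (t + n) % n := by congr 1; omega
            _ = t % n := by rw [Nat.add_mod_right]
          have hmem := hedge i hin
          rw [hv1, hv2] at hmem
          rwa [Sym2.eq_swap] at hmem
        · exact (hdeg ⟨d t, w, d (t+1), d (t + (n-1)), he, hA, hB,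
            hw1, hw2, hAB⟩).elim

end Stmt15


/-- Broersma–Veldman: a finite, 2-connected, claw-free graph in which
every induced paw satisfies `φ(a₁,b₁)` or `φ(a₁,b₂)` is pancyclic or a cycle. -/
theorem stmt_15 {V : Type} [Fintype V] (G : SimpleGraph V)
    (h2 : TwoConnected G) (hclaw : HFree claw G) (hpaw : PawCondition G) :
    (∀ s : ℕ, 3 ≤ s → s ≤ Fintype.card V →
      ∃ (a : V) (p : G.Walk a a), p.IsCycle ∧ p.length = s) ∨
    (∃ (a : V) (p : G.Walk a a), p.IsCycle ∧ (∀ v : V, v ∈ p.support) ∧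
      ∀ e ∈ G.edgeSet, e ∈ p.edges) := by
  exact Stmt15.main G h2 hclaw hpaw
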